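/- (RNSP ⇒ ℓ¹ distance bound) If A : ℓ²(Λ) → H^m satisfies the robust null space property with respect to (ω, ρ, κ, s), then for all x, z ∈ ℓ¹_ω(Λ): ‖x − z‖_{1,ω} ≤ ((1+ρ)/(1−ρ))(‖z‖_{1,ω} − ‖x‖_{1,ω} + 2σ_s(x)_{1,ω}) + (2κ/(1−ρ))·√s·‖A(x−z)‖. -/

import Mathlib

open scoped ENNReal Classical

/-- Weighted `ℓ¹` norm (with value in `ℝ≥0∞`). -/
noncomputable def ewnorm1 {Λ : Type*} (ω : Λ → ℝ) (x : Λ → ℂ) : ℝ≥0∞ :=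
  ∑' i, ENNReal.ofReal (‖x i‖ * ω i)

/-- Weighted `ℓ¹` norm (real-valued, for summable vectors). -/
noncomputable def wnorm1 {Λ : Type*} (ω : Λ → ℝ) (x : Λ → ℂ) : ℝ :=
  ∑' i, ‖x i‖ * ω i

/-- Error of best `s`-`ω`-sparse approximation of `x` in `ℓ¹_ω`. -/
noncomputable def sigma1 {Λ : Type*} (ω : Λ → ℝ) (s : ℝ) (x : Λ → ℂ) : ℝ :=
  sInf {t : ℝ | ∃ y : Λ → ℂ,
    (∑' i, if y i = 0 then (0 : ℝ≥0∞) else ENNReal.ofReal (ω i ^ 2)) ≤ ENNReal.ofReal s ∧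
    Summable (fun i => ‖x i - y i‖ * ω i) ∧ t = wnorm1 ω (fun i => x i - y i)}

/-- The robust null space property with respect to `(ω, ρ, κ, s)`. -/
def RNSP {Λ E : Type*} [NormedAddCommGroup E] [NormedSpace ℂ E]
    (A : (Λ → ℂ) →ₗ[ℂ] E) (ω : Λ → ℝ) (ρ κ : ℝ) (s : ℕ) : Prop :=
  ∀ x : Λ → ℂ, Memℓp x 2 → ∀ S : Finset Λ, (∑ i ∈ S, ω i ^ 2) ≤ (s : ℝ) →
    ENNReal.ofReal (Real.sqrt (∑ i ∈ S, ‖x i‖ ^ 2)) ≤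
      ENNReal.ofReal (ρ / Real.sqrt s) * ewnorm1 ω (fun i => if i ∈ S then 0 else x i) +
        ENNReal.ofReal (κ * ‖A x‖)

private theorem piece_summable' {Λ : Type*} (f : Λ → ℝ) (hf0 : ∀ i, 0 ≤ f i)
    (hf : Summable f) (S : Finset Λ) : Summable (fun i => if i ∈ S then 0 else f i) :=
  Summable.of_nonneg_of_le (fun i => by split <;> simp [hf0 i])
    (fun i => by split <;> simp [hf0 i]) hf

private theorem tsplit' {Λ : Type*} (f : Λ → ℝ) (hf0 : ∀ i, 0 ≤ f i) (hf : Summable f)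
    (S : Finset Λ) :
    ∑' i, f i = (∑ i ∈ S, f i) + ∑' i, (if i ∈ S then 0 else f i) := by
  have h1 : Summable (fun i => if i ∈ S then f i else 0) :=
    Summable.of_nonneg_of_le (fun i => by split <;> simp [hf0 i])
      (fun i => by split <;> simp [hf0 i]) hf
  have h2 : Summable (fun i => if i ∈ S then 0 else f i) := piece_summable' f hf0 hf S
  rw [show (∑' i, f i) = ∑' i, ((fun i => if i ∈ S then f i else 0) i
      + (fun i => if i ∈ S then 0 else f i) i) from
    tsum_congr fun i => by by_cases h : i ∈ S <;> simp [h]]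
  rw [Summable.tsum_add h1 h2, tsum_eq_sum (s := S) (fun b hb => by simp [hb])]
  simp

set_option maxHeartbeats 2000000 in
/-- RNSP ⇒ ℓ¹ distance bound: if `A` satisfies the RNSP w.r.t. `(ω, ρ, κ, s)`, then for all
`x, z ∈ ℓ¹_ω(Λ)`:
`‖x − z‖_{1,ω} ≤ ((1+ρ)/(1−ρ))(‖z‖_{1,ω} − ‖x‖_{1,ω} + 2σ_s(x)_{1,ω}) + (2κ/(1−ρ))√s ‖A(x−z)‖`. -/
theorem stmt3 {Λ E : Type*} [Countable Λ] [NormedAddCommGroup E] [NormedSpace ℂ E]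
    (A : (Λ → ℂ) →ₗ[ℂ] E) (ω : Λ → ℝ) (hω : ∀ i, 1 ≤ ω i) (s : ℕ) (hs : 1 ≤ s)
    (ρ κ : ℝ) (hρ0 : 0 < ρ) (hρ : ρ < 1) (hκ : 0 < κ)
    (hA : RNSP A ω ρ κ s)
    (x z : Λ → ℂ) (hx1 : Summable fun i => ‖x i‖ * ω i)
    (hz1 : Summable fun i => ‖z i‖ * ω i) :
    wnorm1 ω (fun i => x i - z i) ≤
      (1 + ρ) / (1 - ρ) * (wnorm1 ω z - wnorm1 ω x + 2 * sigma1 ω s x) +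
        2 * κ / (1 - ρ) * Real.sqrt s * ‖A (x - z)‖ := by
  classical
  set v : Λ → ℂ := x - z with hv
  have hvai : ∀ i, v i = x i - z i := fun i => rfl
  have hω0 : ∀ i, (0:ℝ) ≤ ω i := fun i => le_trans zero_le_one (hω i)
  have hv1 : Summable (fun i => ‖v i‖ * ω i) := by
    apply Summable.of_nonneg_of_le (fun i => mul_nonneg (norm_nonneg _) (hω0 i))
      (fun i => ?_) (hx1.add hz1)
    calc ‖v i‖ * ω i ≤ (‖x i‖ + ‖z i‖) * ω i :=
          mul_le_mul_of_nonneg_right (by rw [hvai]; exact norm_sub_le _ _) (hω0 i)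
      _ = ‖x i‖ * ω i + ‖z i‖ * ω i := by ring
  have hv2 : Memℓp v 2 := by
    have hs1 : Summable (fun i => ‖v i‖) := Summable.of_nonneg_of_le (fun i => norm_nonneg _)
      (fun i => le_mul_of_one_le_right (norm_nonneg _) (hω i)) hv1
    have h1' : Memℓp v 1 := memℓp_gen (by simpa using hs1)
    exact h1'.of_exponent_ge (by norm_num)
  have h1ρ : (0:ℝ) < 1 - ρ := by linarith
  have h1ρ' : (0:ℝ) < 1 + ρ := by linarith
  have hs0 : (0:ℝ) < s := by exact_mod_cast hs
  have hss : (0:ℝ) < Real.sqrt s := Real.sqrt_pos.2 hs0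
  apply le_of_forall_pos_le_add
  intro ε' hε'
  set ε : ℝ := ε' * (1 - ρ) / (2 * (1 + ρ)) with hεdef
  have hε : 0 < ε := by positivity
  set T : Set ℝ := {t : ℝ | ∃ y : Λ → ℂ,
    (∑' i, if y i = 0 then (0 : ℝ≥0∞) else ENNReal.ofReal (ω i ^ 2)) ≤ ENNReal.ofReal s ∧
    Summable (fun i => ‖x i - y i‖ * ω i) ∧ t = wnorm1 ω (fun i => x i - y i)} with hT
  have hσdef : sigma1 ω (s:ℝ) x = sInf T := rfl
  have hne : T.Nonempty := by
    refine ⟨wnorm1 ω x, 0, by simp, by simpa using hx1, ?_⟩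
    simp [wnorm1]
  obtain ⟨t, ht, htlt⟩ := Real.lt_sInf_add_pos hne hε
  obtain ⟨y, hy_sp, hxy1, rfl⟩ := ht
  -- finiteness of the support of y
  have hfin : (Function.support y).Finite := by
    by_contra hinf
    have hinf' : (Function.support y).Infinite := hinf
    obtain ⟨F, hFsub, hFcard⟩ := hinf'.exists_subset_card_eq (s+1)
    have hle : (∑ i ∈ F, if y i = 0 then (0:ℝ≥0∞) else ENNReal.ofReal (ω i ^ 2))
        ≤ ENNReal.ofReal s := le_trans (ENNReal.sum_le_tsum F) hy_sp
    have hge : ((F.card : ℕ) : ℝ≥0∞) ≤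
        ∑ i ∈ F, (if y i = 0 then (0:ℝ≥0∞) else ENNReal.ofReal (ω i ^ 2)) := by
      calc ((F.card : ℕ) : ℝ≥0∞) = ∑ _i ∈ F, 1 := by simp
        _ ≤ _ := by
          apply Finset.sum_le_sum
          intro i hi
          have hyi : y i ≠ 0 := hFsub hi
          have h1 : (1:ℝ) ≤ ω i ^ 2 := by nlinarith [hω i]
          simp only [hyi, if_false]
          calc (1:ℝ≥0∞) = ENNReal.ofReal 1 := by simp
            _ ≤ ENNReal.ofReal (ω i ^ 2) := ENNReal.ofReal_le_ofReal h1
    have hcon : ((s+1 : ℕ) : ℝ≥0∞) ≤ ((s : ℕ) : ℝ≥0∞) := by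
      calc ((s+1 : ℕ) : ℝ≥0∞) = ((F.card : ℕ) : ℝ≥0∞) := by rw [hFcard]
        _ ≤ _ := hge
        _ ≤ ENNReal.ofReal s := hle
        _ = ((s : ℕ) : ℝ≥0∞) := ENNReal.ofReal_natCast s
    have : (s+1 : ℕ) ≤ (s : ℕ) := by exact_mod_cast hcon
    omega
  set S : Finset Λ := hfin.toFinset with hSdef
  have hSmem : ∀ i, i ∈ S ↔ y i ≠ 0 := fun i => by
    simp [hSdef, Function.mem_support]
  have hSout : ∀ i, i ∉ S → y i = 0 := fun i hi =>
    not_not.1 (fun h => hi ((hSmem i).2 h))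
  have hωS : (∑ i ∈ S, ω i ^ 2) ≤ (s:ℝ) := by
    have heq : (∑' i, if y i = 0 then (0:ℝ≥0∞) else ENNReal.ofReal (ω i ^ 2))
        = ENNReal.ofReal (∑ i ∈ S, ω i ^ 2) := by
      rw [tsum_eq_sum (s := S) (fun b hb => by simp [hSout b hb])]
      rw [ENNReal.ofReal_sum_of_nonneg (fun i _ => sq_nonneg _)]
      exact Finset.sum_congr rfl fun i hi => by simp [(hSmem i).1 hi]
    rw [heq] at hy_sp
    exact (ENNReal.ofReal_le_ofReal_iff (by positivity)).1 hy_sp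
  -- abbreviations
  have hnn : ∀ (w : Λ → ℂ) (i : Λ), 0 ≤ ‖w i‖ * ω i :=
    fun w i => mul_nonneg (norm_nonneg _) (hω0 i)
  set aS : ℝ := ∑ i ∈ S, ‖v i‖ * ω i with haS
  set ac : ℝ := ∑' i, (if i ∈ S then 0 else ‖v i‖ * ω i) with hac
  set xc : ℝ := ∑' i, (if i ∈ S then 0 else ‖x i‖ * ω i) with hxc
  set zc : ℝ := ∑' i, (if i ∈ S then 0 else ‖z i‖ * ω i) with hzc
  have hacs : Summable (fun i => if i ∈ S then 0 else ‖v i‖ * ω i) :=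
    piece_summable' _ (hnn v) hv1 S
  have hxcs : Summable (fun i => if i ∈ S then 0 else ‖x i‖ * ω i) :=
    piece_summable' _ (hnn x) hx1 S
  have hzcs : Summable (fun i => if i ∈ S then 0 else ‖z i‖ * ω i) :=
    piece_summable' _ (hnn z) hz1 S
  have hac0 : 0 ≤ ac := tsum_nonneg (fun i => by
    by_cases h : i ∈ S <;> simp only [h, if_true, if_false]
    · exact le_refl 0
    · exact hnn v i)
  have hWv : wnorm1 ω v = aS + ac := tsplit' _ (hnn v) hv1 S
  have hWx : wnorm1 ω x = (∑ i ∈ S, ‖x i‖ * ω i) + xc := tsplit' _ (hnn x) hx1 S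
  have hWz : wnorm1 ω z = (∑ i ∈ S, ‖z i‖ * ω i) + zc := tsplit' _ (hnn z) hz1 S
  -- triangle inequality off S
  have htri1 : ac ≤ xc + zc := by
    rw [hac, hxc, hzc, ← Summable.tsum_add hxcs hzcs]
    apply Summable.tsum_le_tsum (fun i => ?_) hacs (hxcs.add hzcs)
    by_cases h : i ∈ S
    · simp [h]
    · simp only [h, if_false]
      calc ‖v i‖ * ω i ≤ (‖x i‖ + ‖z i‖) * ω i :=
            mul_le_mul_of_nonneg_right (by rw [hvai]; exact norm_sub_le _ _) (hω0 i)
        _ = ‖x i‖ * ω i + ‖z i‖ * ω i := by ring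
  -- triangle inequality on S
  have htri2 : (∑ i ∈ S, ‖x i‖ * ω i) ≤ (∑ i ∈ S, ‖z i‖ * ω i) + aS := by
    rw [haS, ← Finset.sum_add_distrib]
    apply Finset.sum_le_sum
    intro i _
    have hx' : ‖x i‖ ≤ ‖z i‖ + ‖v i‖ := by
      rw [hvai]
      calc ‖x i‖ = ‖z i + (x i - z i)‖ := by ring_nf
        _ ≤ ‖z i‖ + ‖x i - z i‖ := norm_add_le _ _
    nlinarith [hω0 i]
  -- xc is at most the approximation error
  have hxc_t : xc ≤ wnorm1 ω (fun i => x i - y i) := by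
    rw [hxc]
    apply Summable.tsum_le_tsum (fun i => ?_) hxcs hxy1
    by_cases h : i ∈ S
    · rw [if_pos h]
      exact mul_nonneg (norm_nonneg _) (hω0 i)
    · rw [if_neg h, hSout i h, sub_zero]
  -- apply RNSP
  have hRN := hA v hv2 S hωS
  have hew : ewnorm1 ω (fun i => if i ∈ S then 0 else v i) = ENNReal.ofReal ac := by
    calc ewnorm1 ω (fun i => if i ∈ S then 0 else v i)
        = ∑' i, ENNReal.ofReal (if i ∈ S then 0 else ‖v i‖ * ω i) :=
          tsum_congr fun i => by by_cases h : i ∈ S <;> simp [ewnorm1, h]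
      _ = ENNReal.ofReal ac :=
          (ENNReal.ofReal_tsum_of_nonneg
            (fun i => by
              by_cases h : i ∈ S <;> simp only [h, if_true, if_false]
              · exact le_refl 0
              · exact hnn v i) hacs).symm
  rw [hew, ← ENNReal.ofReal_mul (by positivity : (0:ℝ) ≤ ρ / Real.sqrt s),
    ← ENNReal.ofReal_add (mul_nonneg (by positivity) hac0) (by positivity)] at hRN
  have hkey : Real.sqrt (∑ i ∈ S, ‖v i‖ ^ 2) ≤ ρ / Real.sqrt s * ac + κ * ‖A v‖ :=
    (ENNReal.ofReal_le_ofReal_iff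
      (add_nonneg (mul_nonneg (by positivity) hac0) (by positivity))).1 hRN
  -- Cauchy–Schwarz
  have haS0 : 0 ≤ aS := Finset.sum_nonneg fun i _ => hnn v i
  have hCS : aS ≤ Real.sqrt s * Real.sqrt (∑ i ∈ S, ‖v i‖ ^ 2) := by
    have h2 : aS ^ 2 ≤ (∑ i ∈ S, ω i ^ 2) * (∑ i ∈ S, ‖v i‖ ^ 2) := by
      have hcs := Finset.sum_mul_sq_le_sq_mul_sq S (fun i => ω i) (fun i => ‖v i‖)
      calc aS ^ 2 = (∑ i ∈ S, ω i * ‖v i‖) ^ 2 := by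
            rw [haS]; congr 1; exact Finset.sum_congr rfl fun i _ => by ring
        _ ≤ _ := hcs
    calc aS = Real.sqrt (aS ^ 2) := (Real.sqrt_sq haS0).symm
      _ ≤ Real.sqrt ((∑ i ∈ S, ω i ^ 2) * (∑ i ∈ S, ‖v i‖ ^ 2)) := Real.sqrt_le_sqrt h2
      _ = Real.sqrt (∑ i ∈ S, ω i ^ 2) * Real.sqrt (∑ i ∈ S, ‖v i‖ ^ 2) :=
          Real.sqrt_mul (Finset.sum_nonneg fun i _ => sq_nonneg _) _
      _ ≤ Real.sqrt s * Real.sqrt (∑ i ∈ S, ‖v i‖ ^ 2) :=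
          mul_le_mul_of_nonneg_right (Real.sqrt_le_sqrt hωS) (Real.sqrt_nonneg _)
  have h1 : aS ≤ ρ * ac + κ * Real.sqrt s * ‖A v‖ := by
    calc aS ≤ Real.sqrt s * (ρ / Real.sqrt s * ac + κ * ‖A v‖) :=
          le_trans hCS (mul_le_mul_of_nonneg_left hkey (Real.sqrt_nonneg _))
      _ = ρ * ac + κ * Real.sqrt s * ‖A v‖ := by field_simp
  have hK0 : 0 ≤ κ * Real.sqrt s * ‖A v‖ := by positivity
  have h2 : ac ≤ (wnorm1 ω z - wnorm1 ω x) + 2 * xc + aS := by linarith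
  have h3 : ac * (1 - ρ) ≤ (wnorm1 ω z - wnorm1 ω x + 2 * xc) + κ * Real.sqrt s * ‖A v‖ := by
    nlinarith
  have hD : xc < sigma1 ω (s:ℝ) x + ε := lt_of_le_of_lt hxc_t (by rw [hσdef]; exact htlt)
  -- conclusion
  have hgoal_lhs : wnorm1 ω (fun i => x i - z i) = aS + ac := by
    rw [show (fun i => x i - z i) = v from funext fun i => (hvai i).symm]
    exact hWv
  have hrhs2 : ((1 + ρ) / (1 - ρ) * (wnorm1 ω z - wnorm1 ω x + 2 * sigma1 ω (s:ℝ) x) +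
        2 * κ / (1 - ρ) * Real.sqrt (s:ℝ) * ‖A v‖ + ε') * (1 - ρ)
      = (1 + ρ) * (wnorm1 ω z - wnorm1 ω x + 2 * sigma1 ω (s:ℝ) x)
        + 2 * (κ * Real.sqrt (s:ℝ) * ‖A v‖) + 2 * (1 + ρ) * ε := by
    rw [hεdef]
    field_simp
  have e1 : aS + ac ≤ (1 + ρ) * ac + κ * Real.sqrt (s:ℝ) * ‖A v‖ := by nlinarith
  have e2 : (aS + ac) * (1 - ρ) ≤ ((1 + ρ) * ac + κ * Real.sqrt (s:ℝ) * ‖A v‖) * (1 - ρ) :=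
    mul_le_mul_of_nonneg_right e1 h1ρ.le
  have e3 : (1 + ρ) * (ac * (1 - ρ)) ≤
      (1 + ρ) * ((wnorm1 ω z - wnorm1 ω x + 2 * xc) + κ * Real.sqrt (s:ℝ) * ‖A v‖) :=
    mul_le_mul_of_nonneg_left h3 h1ρ'.le
  have e4 : (1 + ρ) * xc ≤ (1 + ρ) * (sigma1 ω (s:ℝ) x + ε) :=
    mul_le_mul_of_nonneg_left hD.le h1ρ'.le
  have hmul : (aS + ac) * (1 - ρ) ≤
      ((1 + ρ) / (1 - ρ) * (wnorm1 ω z - wnorm1 ω x + 2 * sigma1 ω (s:ℝ) x) +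
        2 * κ / (1 - ρ) * Real.sqrt (s:ℝ) * ‖A v‖ + ε') * (1 - ρ) := by
    rw [hrhs2]
    nlinarith [e2, e3, e4, hK0, hρ0.le, hρ.le]
  rw [hgoal_lhs]
  exact le_of_mul_le_mul_right hmul h1ρ
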